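/- arXiv:2401.16178 — 4 statements merged into one kernel-verified Lean document; each statement's English description precedes it below -/
import Mathlib

section
/- Let L(t) be the (n+1)×(n+1) lower-triangular matrix with entries L(t)_{i,j} = B^i_j(t) = C(i,j) t^j (1-t)^{i-j} for j ≤ i, and 0 otherwise. Then for each j ∈ {0,…,n}, the vector v_j with components (v_j)_i = C(i,j) is an eigenvector of L(t) with eigenvalue t^j; that is, ∑_k B^i_k(t) C(k,j) = t^j C(i,j) for all i. -/
/-- Bernstein basis polynomial `B^n_j(t) = C(n,j) t^j (1-t)^{n-j}` over a commutative ring. -/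
def bernstein' {R : Type*} [CommRing R] (t : R) (n j : ℕ) : R :=
  (Nat.choose n j : R) * t ^ j * (1 - t) ^ (n - j)

lemma key {R : Type*} [CommRing R] (t : R) (i j : ℕ) :
    ∑ k ∈ Finset.range (i + 1), bernstein' t i k * (Nat.choose k j : R)
      = t ^ j * (Nat.choose i j : R) := by
  rcases le_or_gt j i with hji | hij
  · have hsplit := Finset.sum_range_add_sum_Ico
      (fun k => bernstein' t i k * (Nat.choose k j : R))
      (show j ≤ i + 1 from hji.trans (Nat.le_succ i))
    have hlow : ∑ k ∈ Finset.range j, bernstein' t i k * (Nat.choose k j : R) = 0 := by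
      apply Finset.sum_eq_zero
      intro k hk
      rw [Nat.choose_eq_zero_of_lt (Finset.mem_range.mp hk)]
      push_cast; ring
    rw [← hsplit, hlow, zero_add, Finset.sum_Ico_eq_sum_range]
    have hn : i + 1 - j = (i - j) + 1 := by omega
    rw [hn]
    have hrhs : t ^ j * (Nat.choose i j : R)
        = t ^ j * (Nat.choose i j : R) * (t + (1 - t)) ^ (i - j) := by
      rw [show t + (1 - t) = 1 by ring, one_pow, mul_one]
    rw [hrhs, add_pow, Finset.mul_sum]
    apply Finset.sum_congr rfl
    intro m hm
    have hm' : m ≤ i - j := Finset.mem_range_succ_iff.mp hm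
    have hchoose : (Nat.choose i (j + m) : R) * (Nat.choose (j + m) j : R)
        = (Nat.choose i j : R) * (Nat.choose (i - j) m : R) := by
      rw [← Nat.cast_mul, ← Nat.cast_mul,
        Nat.choose_mul (Nat.le_add_right j m),
        Nat.add_sub_cancel_left]
    have hsub : i - (j + m) = i - j - m := by omega
    simp only [bernstein', hsub, pow_add]
    calc (Nat.choose i (j + m) : R) * (t ^ j * t ^ m) * (1 - t) ^ (i - j - m)
          * (Nat.choose (j + m) j : R)
        = ((Nat.choose i (j + m) : R) * (Nat.choose (j + m) j : R))
          * (t ^ j * t ^ m * (1 - t) ^ (i - j - m)) := by ring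
      _ = _ := by rw [hchoose]; ring
  · rw [Nat.choose_eq_zero_of_lt hij, Finset.sum_eq_zero, Nat.cast_zero, mul_zero]
    intro k hk
    rw [Nat.choose_eq_zero_of_lt (lt_of_le_of_lt (Finset.mem_range_succ_iff.mp hk) hij)]
    push_cast; ring

theorem deCasteljau_left_eigenvectors {R : Type*} [CommRing R] (t : R) (n : ℕ)
    (j : Fin (n + 1)) (i : Fin (n + 1)) :
    ∑ k : Fin (n + 1), bernstein' t i.1 k.1 * (Nat.choose k.1 j.1 : R)
      = t ^ j.1 * (Nat.choose i.1 j.1 : R) := by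
  rw [Fin.sum_univ_eq_sum_range (fun k => bernstein' t i.1 k * (Nat.choose k j.1 : R)) (n+1)]
  rw [← key t i.1 j.1]
  rw [← Finset.sum_range_add_sum_Ico _ (show i.1 + 1 ≤ n + 1 from i.2)]
  have hz : ∑ k ∈ Finset.Ico (i.1+1) (n+1), bernstein' t i.1 k * (Nat.choose k j.1 : R) = 0 := by
    apply Finset.sum_eq_zero
    intro k hk
    have : Nat.choose i.1 k = 0 := Nat.choose_eq_zero_of_lt (Finset.mem_Ico.mp hk).1
    simp [bernstein', this]
  rw [hz, add_zero]
end

section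
/- Let S be the (n+1)×(n+1) matrix with S_{i,j} = C(i,j), and L(t) the de Casteljau left subdivision matrix with L(t)_{i,j} = C(i,j) t^j (1-t)^{i-j}. Then S⁻¹ L(t) S is the diagonal matrix with diagonal entries 1, t, t², …, t^n; equivalently (S⁻¹ L(t) S)_{i,j} = δ_{i,j} t^i. -/
open Matrix

/-- Master summation lemma: trinomial revision plus binomial theorem. -/
lemma master_sum {R : Type*} [CommRing R] (x y : R) {i j n : ℕ} (hj : j ≤ i) (hi : i ≤ n) :
    ∑ k ∈ Finset.range (n + 1), (i.choose k : R) * (k.choose j : R) * x ^ (k - j) * y ^ (i - k)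
      = (i.choose j : R) * (x + y) ^ (i - j) := by
  have hsub : Finset.Ico j (i + 1) ⊆ Finset.range (n + 1) := by
    intro k hk
    simp only [Finset.mem_Ico, Finset.mem_range] at *
    omega
  rw [← Finset.sum_subset hsub ?_]
  · rw [Finset.sum_Ico_eq_sum_range]
    have hlen : i + 1 - j = (i - j) + 1 := by omega
    rw [hlen, add_pow, Finset.mul_sum]
    apply Finset.sum_congr rfl
    intro r hr
    simp only [Finset.mem_range] at hr
    have h1 : i.choose (j + r) * (j + r).choose j = i.choose j * (i - j).choose r := by
      have := Nat.choose_mul (n := i) (k := j + r) (s := j) (by omega)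
      simpa using this
    have h2 : j + r - j = r := by omega
    have h3 : i - (j + r) = (i - j) - r := by omega
    rw [h2, h3, ← Nat.cast_mul, h1, Nat.cast_mul]
    ring
  · intro k hk hk'
    simp only [Finset.mem_range, Finset.mem_Ico] at hk hk'
    rcases lt_or_ge k j with h | h
    · rw [Nat.choose_eq_zero_of_lt h]; push_cast; ring
    · have : i < k := by omega
      rw [Nat.choose_eq_zero_of_lt this]; push_cast; ring

lemma LS_entry {R : Type*} [CommRing R] (t : R) {k j n : ℕ} (hk : k ≤ n) :
    ∑ m ∈ Finset.range (n + 1),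
        (k.choose m : R) * t ^ m * (1 - t) ^ (k - m) * (m.choose j : R)
      = (k.choose j : R) * t ^ j := by
  rcases le_or_gt j k with hj | hj
  · have key : ∑ m ∈ Finset.range (n + 1),
        (k.choose m : R) * t ^ m * (1 - t) ^ (k - m) * (m.choose j : R)
        = t ^ j * ∑ m ∈ Finset.range (n + 1),
            (k.choose m : R) * (m.choose j : R) * t ^ (m - j) * (1 - t) ^ (k - m) := by
      rw [Finset.mul_sum]
      apply Finset.sum_congr rfl
      intro m _
      rcases le_or_gt j m with hm | hm
      · have : t ^ m = t ^ j * t ^ (m - j) := by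
          rw [← pow_add]; congr 1; omega
        rw [this]; ring
      · rw [Nat.choose_eq_zero_of_lt hm]; push_cast; ring
    rw [key, master_sum t (1 - t) hj hk]
    simp only [add_sub_cancel, one_pow, mul_one]
    ring
  · rw [Nat.choose_eq_zero_of_lt hj]
    push_cast
    rw [zero_mul]
    apply Finset.sum_eq_zero
    intro m _
    rcases le_or_gt m k with hm | hm
    · rw [Nat.choose_eq_zero_of_lt (by omega : m < j)]; push_cast; ring
    · rw [Nat.choose_eq_zero_of_lt hm]; push_cast; ring

lemma step2 {R : Type*} [CommRing R] (t : R) {i j n : ℕ} (hi : i ≤ n) :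
    ∑ k ∈ Finset.range (n + 1),
        (-1 : R) ^ (i + k) * (i.choose k : R) * ((k.choose j : R) * t ^ j)
      = if i = j then t ^ i else 0 := by
  rcases le_or_gt j i with hj | hj
  · have key : ∑ k ∈ Finset.range (n + 1),
        (-1 : R) ^ (i + k) * (i.choose k : R) * ((k.choose j : R) * t ^ j)
        = ((-1 : R) ^ (i + j) * t ^ j) * ∑ k ∈ Finset.range (n + 1),
            (i.choose k : R) * (k.choose j : R) * (-1 : R) ^ (k - j) * (1 : R) ^ (i - k) := by
      rw [Finset.mul_sum]
      apply Finset.sum_congr rfl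
      intro k _
      rcases le_or_gt j k with hkj | hkj
      · have : (-1 : R) ^ (i + k) = (-1 : R) ^ (i + j) * (-1 : R) ^ (k - j) := by
          rw [← pow_add]; congr 1; omega
        rw [this]; ring
      · rw [Nat.choose_eq_zero_of_lt hkj]; push_cast; ring
    rw [key, master_sum (-1 : R) 1 hj hi, neg_add_cancel]
    rcases eq_or_lt_of_le hj with rfl | hlt
    · have : (-1 : R) ^ (j + j) = 1 := Even.neg_one_pow ⟨j, rfl⟩
      simp [this, Nat.sub_self]
    · rw [if_neg (by omega), zero_pow (by omega : i - j ≠ 0)]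
      ring
  · rw [if_neg (by omega)]
    apply Finset.sum_eq_zero
    intro k _
    rcases le_or_gt k i with hk | hk
    · rw [Nat.choose_eq_zero_of_lt (by omega : k < j)]; push_cast; ring
    · rw [Nat.choose_eq_zero_of_lt hk]; push_cast; ring

theorem deCasteljau_left_diagonalized {R : Type*} [CommRing R] (t : R) (n : ℕ) :
    let S : Matrix (Fin (n + 1)) (Fin (n + 1)) R :=
      fun i j => (Nat.choose i.1 j.1 : R)
    let Sinv : Matrix (Fin (n + 1)) (Fin (n + 1)) R :=
      fun i j => (-1 : R) ^ (i.1 + j.1) * (Nat.choose i.1 j.1 : R)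
    let L : Matrix (Fin (n + 1)) (Fin (n + 1)) R :=
      fun i j => (Nat.choose i.1 j.1 : R) * t ^ j.1 * (1 - t) ^ (i.1 - j.1)
    ∀ i j : Fin (n + 1),
      (Sinv * L * S) i j = if i = j then t ^ i.1 else 0 := by
  intro S Sinv L i j
  rw [Matrix.mul_assoc, Matrix.mul_apply]
  have hLS : ∀ k : Fin (n + 1), (L * S) k j = (Nat.choose k.1 j.1 : R) * t ^ j.1 := by
    intro k
    rw [Matrix.mul_apply]
    exact (Fin.sum_univ_eq_sum_range
      (fun m => (Nat.choose k.1 m : R) * t ^ m * (1 - t) ^ (k.1 - m) * (Nat.choose m j.1 : R))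
      (n + 1)).trans (LS_entry t (Nat.lt_succ_iff.mp k.isLt))
  calc ∑ k : Fin (n + 1), Sinv i k * (L * S) k j
      = ∑ k : Fin (n + 1),
          (-1 : R) ^ (i.1 + k.1) * (Nat.choose i.1 k.1 : R)
            * ((Nat.choose k.1 j.1 : R) * t ^ j.1) := by
        apply Finset.sum_congr rfl
        intro k _
        rw [hLS k]
    _ = ∑ k ∈ Finset.range (n + 1),
          (-1 : R) ^ (i.1 + k) * (Nat.choose i.1 k : R)
            * ((Nat.choose k j.1 : R) * t ^ j.1) :=
        Fin.sum_univ_eq_sum_range (fun k => (-1 : R) ^ (i.1 + k) * (Nat.choose i.1 k : R)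
            * ((Nat.choose k j.1 : R) * t ^ j.1)) (n + 1)
    _ = if i = j then t ^ i.1 else 0 := by
        rw [step2 t (Nat.lt_succ_iff.mp i.isLt)]
        congr 1
        simp [Fin.ext_iff]
end

section
/- Let A₀ and A₁ be n×n complex matrices that are simultaneously upper-triangularizable: there is an invertible matrix S such that S⁻¹A₀S and S⁻¹A₁S are both upper-triangular. If the spectral radii of A₀ and A₁ are both strictly less than 1, then every infinite product A_{d₁} A_{d₂} ⋯ A_{d_n} (d_k ∈ {0,1}) converges to the zero matrix as n → ∞; equivalently, for every ε > 0 there is N such that ‖A_{d₁}⋯A_{d_n}‖ < ε for all n ≥ N and all choices of indices d_k ∈ {0,1}. -/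
open Matrix Finset

attribute [local instance] Matrix.linftyOpNormedAddCommGroup Matrix.linftyOpNormedRing

section Aux

variable {n : ℕ}

/-- conjugation of a list product -/
lemma aux_conj_prod {α : Type*} [Monoid α] (P Q : α) (hPQ : P * Q = 1) (hQP : Q * P = 1)
    (f : ℕ → α) (l : List ℕ) :
    (l.map fun k => Q * f k * P).prod = Q * (l.map f).prod * P := by
  induction l with
  | nil => simp [hQP]
  | cons a l ih =>
    simp only [List.map_cons, List.prod_cons, ih]
    rw [show Q * f a * P * (Q * (List.map f l).prod * P)
        = Q * f a * (P * Q) * (List.map f l).prod * P by noncomm_ring, hPQ]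
    noncomm_ring

lemma aux_entry_le (M : Matrix (Fin n) (Fin n) ℂ) (i j : Fin n) : ‖M i j‖ ≤ ‖M‖ := by
  have h1 : ‖M i j‖₊ ≤ ∑ j' : Fin n, ‖M i j'‖₊ :=
    Finset.single_le_sum (f := fun j' => ‖M i j'‖₊) (fun _ _ => zero_le) (Finset.mem_univ j)
  have h2 : (∑ j' : Fin n, ‖M i j'‖₊) ≤ ‖M‖₊ := by
    rw [Matrix.linfty_opNNNorm_def]
    exact Finset.le_sup (f := fun i => ∑ j' : Fin n, ‖M i j'‖₊) (Finset.mem_univ i)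
  exact_mod_cast h1.trans h2

lemma aux_norm_le [Nonempty (Fin n)] (M : Matrix (Fin n) (Fin n) ℂ) (c : ℝ)
    (h : ∀ i, ∑ j, ‖M i j‖ ≤ c) : ‖M‖ ≤ c := by
  obtain ⟨i0⟩ := ‹Nonempty (Fin n)›
  have hc : 0 ≤ c := le_trans (by positivity) (h i0)
  rw [Matrix.linfty_opNorm_def,
    show c = ((c.toNNReal : NNReal) : ℝ) by simp [Real.coe_toNNReal _ hc]]
  norm_cast
  apply Finset.sup_le
  intro i _
  rw [← NNReal.coe_le_coe]
  push_cast
  simpa [Real.coe_toNNReal _ hc] using h i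

lemma aux_prod_le_pow [Nonempty (Fin n)] (ρ : ℝ) (h0 : 0 ≤ ρ)
    (l : List (Matrix (Fin n) (Fin n) ℂ)) (h : ∀ X ∈ l, ‖X‖ ≤ ρ) :
    ‖l.prod‖ ≤ ρ ^ l.length := by
  induction l with
  | nil => simp
  | cons a l ih =>
    simp only [List.prod_cons, List.length_cons, pow_succ']
    calc ‖a * l.prod‖ ≤ ‖a‖ * ‖l.prod‖ := norm_mul_le _ _
    _ ≤ ρ * ρ ^ l.length :=
      mul_le_mul (h a (by simp)) (ih fun X hX => h X (by simp [hX])) (norm_nonneg _) h0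

end Aux

open Filter Topology

set_option maxHeartbeats 1000000 in
theorem joint_products_tend_to_zero (n : ℕ) (A : Fin 2 → Matrix (Fin n) (Fin n) ℂ)
    (S : Matrix (Fin n) (Fin n) ℂ) (hS : IsUnit S)
    (htri : ∀ k : Fin 2, (S⁻¹ * A k * S).BlockTriangular id)
    (hspec : ∀ k : Fin 2, ∀ μ ∈ spectrum ℂ (A k), ‖μ‖ < 1) :
    ∀ ε > (0 : ℝ), ∃ N : ℕ, ∀ m ≥ N, ∀ d : ℕ → Fin 2, ∀ i j : Fin n,
      ‖(((List.range m).map fun k => A (d k)).prod) i j‖ < ε := by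
  rcases Nat.eq_zero_or_pos n with hn | hn
  · subst hn
    exact fun ε hε => ⟨0, fun m _ d i j => i.elim0⟩
  haveI : Nonempty (Fin n) := Fin.pos_iff_nonempty.mp hn
  obtain ⟨i0⟩ := ‹Nonempty (Fin n)›
  set B : Fin 2 → Matrix (Fin n) (Fin n) ℂ := fun k => S⁻¹ * A k * S with hBdef
  have hdetS : IsUnit S.det := (Matrix.isUnit_iff_isUnit_det S).mp hS
  have hSS : S * S⁻¹ = 1 := Matrix.mul_nonsing_inv S hdetS
  have hSS' : S⁻¹ * S = 1 := Matrix.nonsing_inv_mul S hdetS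
  -- diagonal entries of B k lie in the spectrum of A k
  have hdiag : ∀ k (i : Fin n), ‖B k i i‖ < 1 := by
    intro k i
    apply hspec k
    have hspecEq : spectrum ℂ (B k) = spectrum ℂ (A k) := by
      have hBu : B k = (↑(hS.unit⁻¹) : Matrix (Fin n) (Fin n) ℂ) * A k
          * (↑hS.unit : Matrix (Fin n) (Fin n) ℂ) := by
        rw [Matrix.coe_units_inv, hS.unit_spec]
      rw [hBu, spectrum.units_conjugate']
    rw [← hspecEq, spectrum.mem_iff]
    intro hu
    have htri' : (algebraMap ℂ (Matrix (Fin n) (Fin n) ℂ) (B k i i) - B k).BlockTriangular id := by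
      rw [Matrix.algebraMap_eq_diagonal]
      exact (Matrix.blockTriangular_diagonal _).sub (htri k)
    have hdet : (algebraMap ℂ (Matrix (Fin n) (Fin n) ℂ) (B k i i) - B k).det = 0 := by
      rw [Matrix.det_of_upperTriangular htri']
      refine Finset.prod_eq_zero (Finset.mem_univ i) ?_
      simp [Matrix.algebraMap_eq_diagonal]
    have := (Matrix.isUnit_iff_isUnit_det _).mp hu
    rw [hdet] at this
    exact not_isUnit_zero this
  -- constants
  set r : ℝ := univ.sup' ⟨(0, i0), mem_univ _⟩ (fun p : Fin 2 × Fin n => ‖B p.1 p.2 p.2‖) with hrdef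
  have hrle : ∀ k i, ‖B k i i‖ ≤ r := fun k i =>
    Finset.le_sup' (fun p : Fin 2 × Fin n => ‖B p.1 p.2 p.2‖) (mem_univ (k, i))
  have hr1 : r < 1 := by
    rw [hrdef]
    exact (Finset.sup'_lt_iff ..).mpr fun p _ => hdiag p.1 p.2
  have hr0 : 0 ≤ r := le_trans (norm_nonneg _) (hrle 0 i0)
  set M : ℝ := univ.sup' ⟨(0, i0, i0), mem_univ _⟩
    (fun p : Fin 2 × Fin n × Fin n => ‖B p.1 p.2.1 p.2.2‖) with hMdef
  have hMle : ∀ k i j, ‖B k i j‖ ≤ M := fun k i j =>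
    Finset.le_sup' (fun p : Fin 2 × Fin n × Fin n => ‖B p.1 p.2.1 p.2.2‖) (mem_univ (k, i, j))
  have hM0 : 0 ≤ M := le_trans (norm_nonneg _) (hMle 0 i0 i0)
  set t : ℝ := min 1 ((1 - r) / (2 * (n * M + 1))) with htdef
  have hden : (0:ℝ) < 2 * (n * M + 1) := by positivity
  have ht0 : 0 < t := lt_min one_pos (div_pos (by linarith) hden)
  have ht1 : t ≤ 1 := min_le_left _ _
  set ρ : ℝ := (1 + r) / 2 with hρdef
  have hρ0 : 0 ≤ ρ := by rw [hρdef]; linarith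
  have hρ1 : ρ < 1 := by rw [hρdef]; linarith
  have hkey : r + n * (M * t) ≤ ρ := by
    have h2 : t ≤ (1 - r) / (2 * (n * M + 1)) := min_le_right _ _
    rw [le_div_iff₀ hden] at h2
    have hn0 : (0:ℝ) ≤ (n:ℝ) * M := mul_nonneg (Nat.cast_nonneg n) hM0
    rw [hρdef]
    nlinarith [ht0.le]
  -- scaling matrices
  set T : Matrix (Fin n) (Fin n) ℂ := Matrix.diagonal (fun i => (t : ℂ) ^ (i : ℕ)) with hTdef
  set T' : Matrix (Fin n) (Fin n) ℂ := Matrix.diagonal (fun i => ((t : ℂ) ^ (i : ℕ))⁻¹) with hT'def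
  have htC : (t:ℂ) ≠ 0 := by exact_mod_cast ht0.ne'
  have hTT' : T * T' = 1 := by
    ext i j
    rcases eq_or_ne i j with rfl | hij
    · simp [hTdef, hT'def, Matrix.diagonal_mul_diagonal,
        mul_inv_cancel₀ (pow_ne_zero (i:ℕ) htC)]
    · simp [hTdef, hT'def, Matrix.diagonal_mul_diagonal, Matrix.diagonal_apply_ne _ hij,
        Matrix.one_apply_ne hij]
  have hT'T : T' * T = 1 := by
    ext i j
    rcases eq_or_ne i j with rfl | hij
    · simp [hTdef, hT'def, Matrix.diagonal_mul_diagonal,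
        inv_mul_cancel₀ (pow_ne_zero (i:ℕ) htC)]
    · simp [hTdef, hT'def, Matrix.diagonal_mul_diagonal, Matrix.diagonal_apply_ne _ hij,
        Matrix.one_apply_ne hij]
  set C : Fin 2 → Matrix (Fin n) (Fin n) ℂ := fun k => T' * B k * T with hCdef
  -- norm bound on C k
  have hentry : ∀ k (i j : Fin n),
      ‖C k i j‖ = (t ^ (i:ℕ))⁻¹ * ‖B k i j‖ * t ^ (j:ℕ) := by
    intro k i j
    have : C k i j = ((t:ℂ) ^ (i:ℕ))⁻¹ * B k i j * (t:ℂ) ^ (j:ℕ) := by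
      simp [hCdef, hTdef, hT'def, Matrix.mul_diagonal, Matrix.diagonal_mul]
    rw [this]
    simp [norm_mul, norm_inv, norm_pow, Complex.norm_real, Real.norm_eq_abs, abs_of_pos ht0]
  have hCnorm : ∀ k, ‖C k‖ ≤ ρ := by
    intro k
    apply aux_norm_le
    intro i
    rw [← Finset.add_sum_erase _ _ (mem_univ i)]
    have hdiagC : ‖C k i i‖ = ‖B k i i‖ := by
      rw [hentry]
      field_simp
    have hoff : ∀ j ∈ univ.erase i, ‖C k i j‖ ≤ M * t := by
      intro j hj
      rcases lt_or_gt_of_ne (Finset.ne_of_mem_erase hj) with hji | hij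
      · have : B k i j = 0 := htri k hji
        rw [hentry, this, norm_zero, mul_zero, zero_mul]
        positivity
      · obtain ⟨m, hm⟩ : ∃ m, (j:ℕ) = (i:ℕ) + (m+1) := ⟨(j:ℕ) - (i:ℕ) - 1, by
          have := (Fin.lt_def.mp hij); omega⟩
        rw [hentry, hm, pow_add]
        have heq : (t ^ (i:ℕ))⁻¹ * ‖B k i j‖ * (t ^ (i:ℕ) * t ^ (m+1))
            = ‖B k i j‖ * t ^ (m+1) := by
          field_simp
        rw [heq]
        have ht' : t ^ (m+1) ≤ t := by
          calc t ^ (m+1) ≤ t ^ 1 := pow_le_pow_of_le_one ht0.le ht1 (by omega)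
          _ = t := pow_one t
        exact mul_le_mul (hMle k i j) ht' (by positivity) hM0
    have hsum : ∑ j ∈ univ.erase i, ‖C k i j‖ ≤ ((univ.erase i).card : ℝ) * (M * t) := by
      simpa [nsmul_eq_mul] using Finset.sum_le_card_nsmul _ _ _ hoff
    have hcardn : ((univ.erase i).card : ℝ) ≤ n := by
      exact_mod_cast le_trans Finset.card_erase_le (by simp)
    have hMt : (0:ℝ) ≤ M * t := by positivity
    have hCii : ‖C k i i‖ ≤ r := by rw [hdiagC]; exact hrle k i
    calc ‖C k i i‖ + ∑ j ∈ univ.erase i, ‖C k i j‖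
        ≤ r + (n:ℝ) * (M * t) := by
          have := mul_le_mul_of_nonneg_right hcardn hMt
          linarith
      _ ≤ ρ := hkey
  -- cancellation lemmas
  have cancelT : ∀ X : Matrix (Fin n) (Fin n) ℂ, T * (T' * X) = X := fun X => by
    rw [← mul_assoc, hTT', one_mul]
  have cancelT' : ∀ X : Matrix (Fin n) (Fin n) ℂ, T' * (T * X) = X := fun X => by
    rw [← mul_assoc, hT'T, one_mul]
  have cancelS : ∀ X : Matrix (Fin n) (Fin n) ℂ, S * (S⁻¹ * X) = X := fun X => by
    rw [← mul_assoc, hSS, one_mul]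
  have cancelS' : ∀ X : Matrix (Fin n) (Fin n) ℂ, S⁻¹ * (S * X) = X := fun X => by
    rw [← mul_assoc, hSS', one_mul]
  have hA : ∀ k, A k = (S * T) * C k * (T' * S⁻¹) := by
    intro k
    simp only [hCdef, hBdef, mul_assoc, cancelT, cancelT', cancelS, cancelS']
    rw [hSS, mul_one]
  have hPQ : (T' * S⁻¹) * (S * T) = 1 := by
    rw [mul_assoc, cancelS', hT'T]
  have hQP : (S * T) * (T' * S⁻¹) = 1 := by
    rw [mul_assoc, cancelT, hSS]
  -- finish
  intro ε hε
  have hten : Tendsto (fun m : ℕ => (‖S * T‖ * ‖T' * S⁻¹‖) * ρ ^ m) atTop (nhds 0) := by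
    simpa using (tendsto_pow_atTop_nhds_zero_of_lt_one hρ0 hρ1).const_mul (‖S * T‖ * ‖T' * S⁻¹‖)
  obtain ⟨N, hN⟩ := Filter.eventually_atTop.mp (hten.eventually (gt_mem_nhds hε))
  refine ⟨N, fun m hm d i j => ?_⟩
  have hprod : ((List.range m).map fun k => A (d k)).prod
      = (S * T) * ((List.range m).map fun k => C (d k)).prod * (T' * S⁻¹) := by
    rw [show (fun k => A (d k)) = fun k => (S * T) * C (d k) * (T' * S⁻¹) from
      funext fun k => hA (d k)]
    exact aux_conj_prod _ _ hPQ hQP _ _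
  have h1 : ‖((List.range m).map fun k => C (d k)).prod‖ ≤ ρ ^ m := by
    have := aux_prod_le_pow ρ hρ0 ((List.range m).map fun k => C (d k)) ?_
    · simpa using this
    · intro X hX
      obtain ⟨k, -, rfl⟩ := List.mem_map.mp hX
      exact hCnorm (d k)
  calc ‖(((List.range m).map fun k => A (d k)).prod) i j‖
      ≤ ‖((List.range m).map fun k => A (d k)).prod‖ := aux_entry_le _ i j
    _ ≤ ‖S * T‖ * ‖((List.range m).map fun k => C (d k)).prod‖ * ‖T' * S⁻¹‖ := by
        rw [hprod]
        calc ‖(S * T) * ((List.range m).map fun k => C (d k)).prod * (T' * S⁻¹)‖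
            ≤ ‖(S * T) * ((List.range m).map fun k => C (d k)).prod‖ * ‖T' * S⁻¹‖ :=
              norm_mul_le _ _
          _ ≤ _ := mul_le_mul_of_nonneg_right (norm_mul_le _ _) (norm_nonneg _)
    _ ≤ ‖S * T‖ * ρ ^ m * ‖T' * S⁻¹‖ :=
        mul_le_mul_of_nonneg_right (mul_le_mul_of_nonneg_left h1 (norm_nonneg _))
          (norm_nonneg _)
    _ = (‖S * T‖ * ‖T' * S⁻¹‖) * ρ ^ m := mul_right_comm _ _ _
    _ < ε := hN m hm
end

section
/- Let d₁, d₂, … ∈ {0,1}, and for n ≥ 0 set r_n = ∑_{k=1}^n d_k/2^k and u_n = ∑_{k=1}^n d_k. Then for every m ≥ n: T(r_n + 2^{-m}) - T(r_n) = (m - 2u_n)/2^m, where T is the Takagi function. -/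
/-- The distance from `x` to the nearest integer. -/
noncomputable def distNearestInt (x : ℝ) : ℝ := ⨅ n : ℤ, |x - (n : ℝ)|

lemma dni_bdd (x : ℝ) : BddBelow (Set.range fun n : ℤ => |x - (n : ℝ)|) :=
  ⟨0, by rintro _ ⟨n, rfl⟩; positivity⟩

lemma dni_eq_self {x : ℝ} (h0 : 0 ≤ x) (h : x ≤ 1/2) : distNearestInt x = x := by
  apply le_antisymm
  · have := ciInf_le (dni_bdd x) 0
    simpa [distNearestInt, abs_of_nonneg h0] using this
  · apply le_ciInf; intro k
    rcases le_or_gt (k : ℝ) 0 with hk | hk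
    · rw [abs_of_nonneg (by linarith)]; linarith
    · have : (1:ℝ) ≤ k := by exact_mod_cast hk
      rw [abs_of_nonpos (by linarith)]; linarith

lemma dni_eq_one_sub {x : ℝ} (h0 : 1/2 ≤ x) (h : x ≤ 1) : distNearestInt x = 1 - x := by
  apply le_antisymm
  · have := ciInf_le (dni_bdd x) 1
    simpa [distNearestInt, abs_of_nonpos (by linarith : x - (1:ℝ) ≤ 0)] using this
  · apply le_ciInf; intro k
    rcases le_or_gt (k : ℝ) 0 with hk | hk
    · rw [abs_of_nonneg (by linarith)]; linarith
    · have : (1:ℝ) ≤ k := by exact_mod_cast hk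
      rw [abs_of_nonpos (by linarith)]; linarith

lemma dni_add_int (x : ℝ) (k : ℤ) : distNearestInt (x + k) = distNearestInt x := by
  unfold distNearestInt
  apply le_antisymm
  · apply le_ciInf; intro j
    have := ciInf_le (dni_bdd (x + k)) (j + k)
    simpa [add_sub_add_right_eq_sub] using this
  · apply le_ciInf; intro j
    have := ciInf_le (dni_bdd x) (j - k)
    have h : |x + (k:ℝ) - (j:ℝ)| = |x - ((j - k : ℤ) : ℝ)| := by push_cast; ring_nf
    rw [h]; exact this

lemma dni_nonneg (x : ℝ) : 0 ≤ distNearestInt x := le_ciInf fun k => abs_nonneg _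

lemma dni_le_half (x : ℝ) : distNearestInt x ≤ 1/2 :=
  (ciInf_le (dni_bdd x) (round x)).trans (abs_sub_round x)

lemma takagi_summable (x : ℝ) : Summable (fun j : ℕ => distNearestInt (2 ^ j * x) / 2 ^ j) := by
  have hg : Summable (fun j : ℕ => (1/2 : ℝ) / 2 ^ j) := by
    simpa [div_eq_mul_inv, inv_pow] using (summable_geometric_two.mul_left (1/2 : ℝ))
  refine Summable.of_nonneg_of_le (fun j => div_nonneg (dni_nonneg _) (by positivity)) (fun j => ?_) hg
  gcongr
  exact dni_le_half _

lemma dni_diff_lo {x ε : ℝ} (hx : 0 ≤ x) (hε : 0 ≤ ε) (h : x + ε ≤ 1/2) :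
    distNearestInt (x + ε) - distNearestInt x = ε := by
  rw [dni_eq_self (by linarith) h, dni_eq_self hx (by linarith)]; ring

lemma dni_diff_hi {x ε : ℝ} (hx : 1/2 ≤ x) (hε : 0 ≤ ε) (h : x + ε ≤ 1) :
    distNearestInt (x + ε) - distNearestInt x = -ε := by
  rw [dni_eq_one_sub (by linarith) h, dni_eq_one_sub hx (by linarith)]; ring

lemma digit_sum_bound (d : ℕ → Fin 2) (j : ℕ) : ∀ n, j < n →
    ∑ k ∈ Finset.Ico (j+1) n, (d k : ℝ) * (1/2) ^ (k + 1 - j) ≤ 1/2 - (1/2) ^ (n - j) := by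
  intro n hn
  induction n, hn using Nat.le_induction with
  | base =>
    have h1 : j + 1 - j = 1 := by omega
    simp [h1]
  | succ n hn ih =>
    rw [Finset.sum_Ico_succ_top hn]
    have h1 : n + 1 - j = (n - j) + 1 := by omega
    have h2 : (d n : ℝ) ≤ 1 := by
      have := (d n).isLt
      have : ((d n : ℕ) : ℝ) ≤ 1 := by exact_mod_cast Nat.lt_succ_iff.mp this
      simpa using this
    have h3 : (0:ℝ) ≤ (1/2 : ℝ) ^ (n - j) := by positivity
    have h4 : (0:ℝ) ≤ (d n : ℝ) := by positivity
    rw [h1, pow_succ]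
    nlinarith

lemma split_lt (d : ℕ → Fin 2) (n j : ℕ) (hj : j ≤ n) :
    (2:ℝ)^j * ∑ k ∈ Finset.range n, (d k : ℝ)/2^(k+1)
      = ((∑ k ∈ Finset.range j, (d k : ℕ) * 2^(j-1-k) : ℕ) : ℝ)
        + ∑ k ∈ Finset.Ico j n, (d k : ℝ) * (1/2)^(k+1-j) := by
  rw [Finset.range_eq_Ico, ← Finset.sum_Ico_consecutive _ (Nat.zero_le j) hj, mul_add,
    ← Finset.range_eq_Ico]
  congr 1
  · push_cast
    rw [Finset.mul_sum]
    refine Finset.sum_congr rfl fun k hk => ?_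
    have hkj : k < j := Finset.mem_range.mp hk
    have h1 : (j - 1 - k) + (k + 1) = j := by omega
    rw [← h1, pow_add]
    field_simp
    ring_nf; congr 2; omega
  · rw [Finset.mul_sum]
    refine Finset.sum_congr rfl fun k hk => ?_
    have hkj : j ≤ k := (Finset.mem_Ico.mp hk).1
    have h1 : j + (k + 1 - j) = k + 1 := by omega
    rw [div_pow, one_pow, ← h1, pow_add]
    field_simp
    ring_nf; congr 2; omega

lemma split_ge (d : ℕ → Fin 2) (n j : ℕ) (hj : n ≤ j) :
    (2:ℝ)^j * ∑ k ∈ Finset.range n, (d k : ℝ)/2^(k+1)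
      = ((∑ k ∈ Finset.range n, (d k : ℕ) * 2^(j-1-k) : ℕ) : ℝ) := by
  push_cast
  rw [Finset.mul_sum]
  refine Finset.sum_congr rfl fun k hk => ?_
  have hkj : k < n := Finset.mem_range.mp hk
  have h1 : (j - 1 - k) + (k + 1) = j := by omega
  rw [← h1, pow_add]
  field_simp
  ring_nf; congr 2; omega

lemma key_s14 (d : ℕ → Fin 2) (n m j : ℕ) (hmn : n ≤ m) (hjm : j < m) :
    distNearestInt (2^j * ((∑ k ∈ Finset.range n, (d k : ℝ)/2^(k+1)) + 1/2^m))
      - distNearestInt (2^j * ∑ k ∈ Finset.range n, (d k : ℝ)/2^(k+1))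
    = (if j < n then 1 - 2*(d j : ℝ) else 1) * ((2:ℝ)^j/2^m) := by
  set r : ℝ := ∑ k ∈ Finset.range n, (d k : ℝ)/2^(k+1) with hr
  set ε : ℝ := (2:ℝ)^j/2^m with hεdef
  have hε : ε = (1/2:ℝ)^(m-j) := by
    rw [hεdef, div_pow, one_pow]
    have h1 : j + (m - j) = m := by omega
    rw [← h1, pow_add]
    field_simp
    congr 1; omega
  have hε0 : 0 ≤ ε := by positivity
  have hεhalf : ε ≤ 1/2 := by
    rw [hε]
    calc (1/2:ℝ)^(m-j) ≤ (1/2:ℝ)^1 := by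
          apply pow_le_pow_of_le_one (by norm_num) (by norm_num) (by omega)
      _ = 1/2 := by norm_num
  rcases lt_or_ge j n with hjn | hjn
  · -- j < n
    set A : ℕ := ∑ k ∈ Finset.range j, (d k : ℕ) * 2^(j-1-k) with hA
    set x : ℝ := ∑ k ∈ Finset.Ico j n, (d k : ℝ) * (1/2)^(k+1-j) with hx
    have e2 : (2:ℝ)^j * r = x + ((A : ℤ) : ℝ) := by
      rw [hr, split_lt d n j hjn.le, hA, hx]; push_cast; ring
    have e1 : (2:ℝ)^j * (r + 1/2^m) = (x + ε) + ((A : ℤ) : ℝ) := by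
      rw [mul_add, e2]; ring
    rw [e1, e2, dni_add_int, dni_add_int, if_pos hjn]
    -- decompose x
    have hsplit : x = (d j : ℝ) * (1/2) + ∑ k ∈ Finset.Ico (j+1) n, (d k : ℝ) * (1/2)^(k+1-j) := by
      rw [hx, Finset.sum_eq_sum_Ico_succ_bot hjn]
      have h1 : j + 1 - j = 1 := by omega
      rw [h1, pow_one]
    set y : ℝ := ∑ k ∈ Finset.Ico (j+1) n, (d k : ℝ) * (1/2)^(k+1-j) with hy
    have hy0 : 0 ≤ y := Finset.sum_nonneg fun k _ => by positivity
    have hy1 : y ≤ 1/2 - (1/2)^(n-j) := digit_sum_bound d j n hjn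
    have hεn : ε ≤ (1/2:ℝ)^(n-j) := by
      rw [hε]
      apply pow_le_pow_of_le_one (by norm_num) (by norm_num) (by omega)
    have hv : (d j : ℕ) = 0 ∨ (d j : ℕ) = 1 := by
      have := (d j).isLt; omega
    rcases hv with hv | hv
    · have hx0 : x = y := by rw [hsplit, hv]; push_cast; ring
      rw [hx0, dni_diff_lo hy0 hε0 (by linarith), hv]
      norm_num
    · have hx1 : x = 1/2 + y := by rw [hsplit, hv]; push_cast; ring
      have h1 : (1:ℝ)/2 ≤ x := by rw [hx1]; linarith
      have h2 : x + ε ≤ 1 := by rw [hx1]; linarith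
      rw [dni_diff_hi h1 hε0 h2, hv]
      push_cast
      ring
  · -- n ≤ j
    set B : ℕ := ∑ k ∈ Finset.range n, (d k : ℕ) * 2^(j-1-k) with hB
    have e2 : (2:ℝ)^j * r = 0 + ((B : ℤ) : ℝ) := by
      rw [hr, split_ge d n j hjn, hB]; push_cast; ring
    have e1 : (2:ℝ)^j * (r + 1/2^m) = ε + ((B : ℤ) : ℝ) := by
      rw [mul_add, hr, split_ge d n j hjn, hB, hεdef]; push_cast; ring
    rw [e1, e2, dni_add_int, dni_add_int, if_neg (by omega)]
    rw [dni_eq_self le_rfl (by norm_num), dni_eq_self hε0 hεhalf]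
    ring

/-- The Takagi function `T(x) = ∑_{j=0}^∞ σ(2ʲ x)/2ʲ`. -/
noncomputable def takagi (x : ℝ) : ℝ := ∑' j : ℕ, distNearestInt (2 ^ j * x) / 2 ^ j

theorem takagi_dyadic_increment (d : ℕ → Fin 2) (n m : ℕ) (hmn : n ≤ m) :
    takagi ((∑ k ∈ Finset.range n, (d k : ℝ) / 2 ^ (k + 1)) + 1 / 2 ^ m)
        - takagi (∑ k ∈ Finset.range n, (d k : ℝ) / 2 ^ (k + 1))
      = ((m : ℝ) - 2 * (∑ k ∈ Finset.range n, (d k : ℕ) : ℕ)) / 2 ^ m := by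
  set r : ℝ := ∑ k ∈ Finset.range n, (d k : ℝ) / 2 ^ (k + 1) with hr
  have h1 := takagi_summable (r + 1/2^m)
  have h2 := takagi_summable r
  rw [takagi, takagi, ← Summable.tsum_sub h1 h2]
  have hvanish : ∀ j ∉ Finset.range m,
      distNearestInt (2^j * (r + 1/2^m))/2^j - distNearestInt (2^j*r)/2^j = 0 := by
    intro j hj
    have hjm : m ≤ j := by simpa using hj
    have he : (2:ℝ)^j * (r + 1/2^m) = 2^j*r + (((2^(j-m) : ℕ) : ℤ) : ℝ) := by
      push_cast
      rw [mul_add]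
      congr 1
      have hq : (j - m) + m = j := by omega
      rw [← hq, pow_add]
      field_simp
      congr 1; omega
    rw [he, dni_add_int]
    ring
  rw [tsum_eq_sum hvanish]
  have hterm : ∀ j ∈ Finset.range m,
      distNearestInt (2^j * (r + 1/2^m))/2^j - distNearestInt (2^j*r)/2^j
        = (if j < n then 1 - 2*(d j : ℝ) else 1) / 2^m := by
    intro j hj
    have hjm : j < m := Finset.mem_range.mp hj
    have hk := key_s14 d n m j hmn hjm
    rw [div_sub_div_same, hk]
    field_simp
  rw [Finset.sum_congr rfl hterm, ← Finset.sum_div]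
  congr 1
  rw [← Finset.sum_range_add_sum_Ico _ hmn]
  have hA : ∑ j ∈ Finset.range n, (if j < n then 1 - 2*(d j:ℝ) else 1)
      = (n : ℝ) - 2 * ((∑ k ∈ Finset.range n, (d k : ℕ) : ℕ) : ℝ) := by
    rw [Finset.sum_congr rfl (fun j hj => if_pos (Finset.mem_range.mp hj)),
      Finset.sum_sub_distrib, Finset.sum_const, ← Finset.mul_sum]
    push_cast
    simp
  have hB : ∑ j ∈ Finset.Ico n m, (if j < n then 1 - 2*(d j:ℝ) else 1) = (m : ℝ) - (n : ℝ) := by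
    rw [Finset.sum_congr rfl (fun j hj => if_neg (by
      have := (Finset.mem_Ico.mp hj).1; omega))]
    rw [Finset.sum_const, Nat.card_Ico]
    have : ((m - n : ℕ) : ℝ) = (m : ℝ) - n := by
      push_cast [hmn]; ring
    simp [this]
  rw [hA, hB]
  ring
end
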